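/- arXiv:1804.08698 — 2 statements merged into one kernel-verified Lean document; each statement's English description precedes it below -/
import Mathlib

section
/- Let p ≥ 1 and let S be a finite set of n ≥ 1 points in ℝ^p. Then the number of distinct subsets of S of the form {x ∈ S : ⟨a, x⟩ + b ≥ 0}, where a ranges over ℝ^p and b over ℝ, is at most 2·∑_{i=0}^{p} C(n−1, i). -/
open Module Set

/-- The set of strict sign patterns realizable by the linear functionals `f`. -/
def coverPats {V : Type} [AddCommGroup V] [Module ℝ V] {k : ℕ}
    (f : Fin k → (V →ₗ[ℝ] ℝ)) : Set (Fin k → Bool) :=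
  {s | ∃ w : V, (∀ i, f i w ≠ 0) ∧ s = fun i => decide (0 < f i w)}

lemma coverPats_empty_of_finrank_zero {V : Type} [AddCommGroup V] [Module ℝ V]
    [FiniteDimensional ℝ V] (h0 : finrank ℝ V = 0) {k : ℕ} (hk : 0 < k)
    (f : Fin k → (V →ₗ[ℝ] ℝ)) : coverPats f = ∅ := by
  ext s
  simp only [coverPats, Set.mem_setOf_eq, Set.mem_empty_iff_false, iff_false, not_exists]
  rintro w ⟨hne, -⟩
  have : Subsingleton V := finrank_zero_iff.mp h0
  have hw : w = 0 := Subsingleton.elim _ _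
  exact hne ⟨0, hk⟩ (by simp [hw])

lemma sum_choose_succ_eq (n d : ℕ) :
    ∑ i ∈ Finset.range (d + 1), (n + 1).choose i =
      ∑ i ∈ Finset.range (d + 1), n.choose i + ∑ i ∈ Finset.range d, n.choose i := by
  rw [Finset.sum_range_succ' (fun i => (n + 1).choose i) d,
    Finset.sum_range_succ' (fun i => n.choose i) d]
  simp only [Nat.choose_succ_succ, Finset.sum_add_distrib, Nat.choose_zero_right,
    Nat.succ_eq_add_one]
  omega

theorem coverPats_bound (n : ℕ) :
    ∀ (V : Type) [AddCommGroup V] [Module ℝ V] [FiniteDimensional ℝ V]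
      (f : Fin (n + 1) → (V →ₗ[ℝ] ℝ)),
      (coverPats f).ncard ≤ 2 * ∑ i ∈ Finset.range (finrank ℝ V), n.choose i := by
  induction n with
  | zero =>
    intro V _ _ _ f
    rcases Nat.eq_zero_or_pos (finrank ℝ V) with h0 | hpos
    · rw [coverPats_empty_of_finrank_zero h0 Nat.one_pos]
      simp
    · have hle : (coverPats f).ncard ≤ (Set.univ : Set (Fin 1 → Bool)).ncard :=
        Set.ncard_le_ncard (Set.subset_univ _) Set.finite_univ
      have hcard : (Set.univ : Set (Fin 1 → Bool)).ncard = 2 := by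
        rw [Set.ncard_univ]
        simp [Nat.card_eq_fintype_card]
      have hb : 1 ≤ ∑ i ∈ Finset.range (finrank ℝ V), Nat.choose 0 i := by
        calc 1 = ∑ i ∈ Finset.range 1, Nat.choose 0 i := by simp
          _ ≤ _ := Finset.sum_le_sum_of_subset (by
              intro x hx
              simp only [Finset.mem_range] at *
              omega)
      omega
  | succ n ih =>
    intro V _ _ _ f
    rcases Nat.eq_zero_or_pos (finrank ℝ V) with h0 | hdpos
    · rw [coverPats_empty_of_finrank_zero h0 (Nat.succ_pos _)]
      simp
    set L := Fin.last (n + 1) with hL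
    by_cases hf : f L = 0
    · have hemp : coverPats f = ∅ := by
        ext s
        simp only [coverPats, Set.mem_setOf_eq, Set.mem_empty_iff_false, iff_false, not_exists]
        rintro w ⟨hne, -⟩
        exact hne L (by simp [hf])
      rw [hemp]; simp
    set K := LinearMap.ker (f L) with hKdef
    have hrank : finrank ℝ K + 1 = finrank ℝ V := by
      have hsurj : Function.Surjective (f L) := by
        obtain ⟨v, hv⟩ : ∃ v, f L v ≠ 0 := by
          by_contra h
          push_neg at h
          exact hf (LinearMap.ext fun v => by simpa using h v)
        intro r
        refine ⟨(r / f L v) • v, ?_⟩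
        rw [map_smul, smul_eq_mul]
        field_simp
      have h1 := LinearMap.finrank_range_add_finrank_ker (f L)
      rw [LinearMap.range_eq_top.mpr hsurj, finrank_top, Module.finrank_self, ← hKdef] at h1
      omega
    set g : Fin (n + 1) → ((K : Type) →ₗ[ℝ] ℝ) := fun i => (f i.castSucc).domRestrict K with hg
    set f₀ : Fin (n + 1) → (V →ₗ[ℝ] ℝ) := fun i => f i.castSucc with hf₀
    set flip : (Fin (n + 2) → Bool) → (Fin (n + 2) → Bool) :=
      fun s => Function.update s L (! s L) with hflip
    have flip_last : ∀ s, flip s L = ! s L := fun s => by simp [hflip]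
    have flip_cast : ∀ s (i : Fin (n + 1)), flip s i.castSucc = s i.castSucc := fun s i => by
      simp [hflip, hL, Function.update_of_ne (Fin.castSucc_lt_last i).ne]
    have flip_flip : ∀ s, flip (flip s) = s := fun s => by
      funext j
      by_cases hj : j = L
      · subst hj; simp [hflip]
      · simp [hflip, Function.update_of_ne hj]
    set A := {s ∈ coverPats f | s L = true ∨ flip s ∉ coverPats f} with hA
    set B := {s ∈ coverPats f | s L = false ∧ flip s ∈ coverPats f} with hB
    have hcover : coverPats f ⊆ A ∪ B := by
      intro s hs
      by_cases h1 : s L = true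
      · exact Or.inl ⟨hs, Or.inl h1⟩
      · by_cases h2 : flip s ∈ coverPats f
        · exact Or.inr ⟨hs, Bool.eq_false_iff.mpr h1, h2⟩
        · exact Or.inl ⟨hs, Or.inr h2⟩
    have hA_maps : ∀ s ∈ A, (fun i => s (Fin.castSucc i)) ∈ coverPats f₀ := by
      rintro s ⟨⟨w, hne, hs⟩, -⟩
      refine ⟨w, fun i => hne _, ?_⟩
      funext i
      rw [hs]
    have hA_inj : Set.InjOn (fun s => fun i : Fin (n + 1) => s (Fin.castSucc i)) A := by
      rintro s1 hs1 s2 hs2 heq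
      have hcs : ∀ i : Fin (n + 1), s1 i.castSucc = s2 i.castSucc := fun i => congrFun heq i
      by_contra hne12
      have hdiff : s1 L ≠ s2 L := by
        intro h
        apply hne12
        funext j
        induction j using Fin.lastCases with
        | last => exact h
        | cast i => exact hcs i
      have hflipeq : flip s1 = s2 := by
        funext j
        induction j using Fin.lastCases with
        | last =>
          rw [flip_last]
          cases hb1 : s1 L <;> cases hb2 : s2 L <;> simp_all
        | cast i => rw [flip_cast]; exact hcs i
      have hflipeq2 : flip s2 = s1 := by rw [← hflipeq, flip_flip]
      cases hb : s1 L with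
      | false =>
        rcases hs1.2 with h | h
        · rw [hb] at h; exact Bool.false_ne_true h
        · exact h (hflipeq ▸ hs2.1)
      | true =>
        have hb2 : s2 L = false := by
          cases hb2 : s2 L
          · rfl
          · rw [hb, hb2] at hdiff; exact absurd rfl hdiff
        rcases hs2.2 with h | h
        · rw [hb2] at h; exact Bool.false_ne_true h
        · exact h (hflipeq2 ▸ hs1.1)
    have hB_inj : Set.InjOn (fun s => fun i : Fin (n + 1) => s (Fin.castSucc i)) B := by
      rintro s1 hs1 s2 hs2 heq
      funext j
      induction j using Fin.lastCases with
      | last => rw [hs1.2.1, hs2.2.1]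
      | cast i => exact congrFun heq i
    have hB_maps : ∀ s ∈ B, (fun i => s (Fin.castSucc i)) ∈ coverPats g := by
      rintro s ⟨⟨w₁, hne1, hs1⟩, hsl, w₂, hne2, hs2⟩
      have h1 : f L w₁ < 0 := by
        have hdl : s L = decide (0 < f L w₁) := congrFun hs1 L
        rw [hsl] at hdl
        have hnotpos : ¬ 0 < f L w₁ := by
          intro h
          rw [decide_eq_true h] at hdl
          exact Bool.false_ne_true hdl
        exact (not_lt.mp hnotpos).lt_of_ne (hne1 L)
      have h2 : 0 < f L w₂ := by
        have hdl : flip s L = decide (0 < f L w₂) := congrFun hs2 L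
        rw [flip_last, hsl] at hdl
        exact of_decide_eq_true hdl.symm
      set w : V := (f L w₂) • w₁ + (-(f L w₁)) • w₂ with hw
      have hwK : w ∈ K := by
        simp only [hKdef, LinearMap.mem_ker, hw, map_add, map_smul, smul_eq_mul]
        ring
      have key : ∀ i : Fin (n + 1),
          (f i.castSucc w ≠ 0) ∧ (s i.castSucc = decide (0 < f i.castSucc w)) := by
        intro i
        have hu := hne1 i.castSucc
        have hv := hne2 i.castSucc
        have hcu : s i.castSucc = decide (0 < f i.castSucc w₁) := congrFun hs1 i.castSucc
        have hcv : s i.castSucc = decide (0 < f i.castSucc w₂) := by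
          have h := congrFun hs2 i.castSucc
          rwa [flip_cast] at h
        have hval : f i.castSucc w =
            (f L w₂) * (f i.castSucc w₁) + (-(f L w₁)) * (f i.castSucc w₂) := by
          simp only [hw, map_add, map_smul, smul_eq_mul]
        cases hc : s i.castSucc with
        | true =>
          have hu' : 0 < f i.castSucc w₁ := of_decide_eq_true (hcu.symm.trans hc)
          have hv' : 0 < f i.castSucc w₂ := of_decide_eq_true (hcv.symm.trans hc)
          have hpos : 0 < f i.castSucc w := by
            rw [hval]
            have t1 := mul_pos h2 hu'
            have t2 := mul_pos (neg_pos.mpr h1) hv'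
            linarith
          exact ⟨ne_of_gt hpos, by rw [decide_eq_true hpos]⟩
        | false =>
          have hu' : f i.castSucc w₁ < 0 :=
            (not_lt.mp (of_decide_eq_false (hcu.symm.trans hc))).lt_of_ne hu
          have hv' : f i.castSucc w₂ < 0 :=
            (not_lt.mp (of_decide_eq_false (hcv.symm.trans hc))).lt_of_ne hv
          have hneg : f i.castSucc w < 0 := by
            rw [hval]
            have t1 := mul_neg_of_pos_of_neg h2 hu'
            have t2 := mul_neg_of_pos_of_neg (neg_pos.mpr h1) hv'
            linarith
          refine ⟨ne_of_lt hneg, ?_⟩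
          rw [decide_eq_false (not_lt.mpr (le_of_lt hneg))]
      refine ⟨⟨w, hwK⟩, fun i => ?_, ?_⟩
      · simpa only [hg, LinearMap.domRestrict_apply] using (key i).1
      · funext i
        simpa only [hg, LinearMap.domRestrict_apply] using (key i).2
    have hA_le : A.ncard ≤ (coverPats f₀).ncard :=
      Set.ncard_le_ncard_of_injOn _ hA_maps hA_inj (Set.toFinite _)
    have hB_le : B.ncard ≤ (coverPats g).ncard :=
      Set.ncard_le_ncard_of_injOn _ hB_maps hB_inj (Set.toFinite _)
    have h0 : (coverPats f).ncard ≤ A.ncard + B.ncard :=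
      le_trans (Set.ncard_le_ncard hcover (Set.toFinite _)) (Set.ncard_union_le _ _)
    have iha := ih V f₀
    have ihb := ih (K : Type) g
    obtain ⟨d', hd'⟩ : ∃ d', finrank ℝ V = d' + 1 := ⟨finrank ℝ (K : Type), hrank.symm⟩
    have hK' : finrank ℝ (K : Type) = d' := by omega
    calc (coverPats f).ncard ≤ A.ncard + B.ncard := h0
      _ ≤ (coverPats f₀).ncard + (coverPats g).ncard := Nat.add_le_add hA_le hB_le
      _ ≤ 2 * ∑ i ∈ Finset.range (finrank ℝ V), n.choose i +
            2 * ∑ i ∈ Finset.range (finrank ℝ (K : Type)), n.choose i :=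
          Nat.add_le_add iha ihb
      _ = 2 * ∑ i ∈ Finset.range (finrank ℝ V), (n + 1).choose i := by
          rw [hd', hK', sum_choose_succ_eq]
          ring

open scoped Classical in
/-- Cover's function-counting bound: for a finite set `S` of `n ≥ 1` points in `ℝ^p`
(`p ≥ 1`), the number of distinct halfspace traces `{x ∈ S : ⟨a, x⟩ + b ≥ 0}` is at most
`2 * ∑_{i=0}^{p} C(n-1, i)`. -/
theorem cover_halfspace_trace_bound (p n : ℕ) (hp : 1 ≤ p) (hn : 1 ≤ n)
    (S : Finset (EuclideanSpace ℝ (Fin p))) (hS : S.card = n) :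
    Set.ncard {T : Set (EuclideanSpace ℝ (Fin p)) |
        ∃ (a : EuclideanSpace ℝ (Fin p)) (b : ℝ),
          T = {x | x ∈ S ∧ 0 ≤ (inner ℝ a x : ℝ) + b}} ≤
      2 * ∑ i ∈ Finset.range (p + 1), (n - 1).choose i := by
  obtain ⟨m, rfl⟩ : ∃ m, n = m + 1 := ⟨n - 1, by omega⟩
  have hcard : Fintype.card {y // y ∈ S} = m + 1 := by
    rw [Fintype.card_coe]; exact hS
  let e : Fin (m + 1) ≃ {y // y ∈ S} := (Fintype.equivFinOfCardEq hcard).symm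
  let x : Fin (m + 1) → EuclideanSpace ℝ (Fin p) := fun i => (e i : EuclideanSpace ℝ (Fin p))
  have hxS : ∀ i, x i ∈ S := fun i => (e i).2
  have hxsurj : ∀ y ∈ S, ∃ i, x i = y := fun y hy => ⟨e.symm ⟨y, hy⟩, by simp [x]⟩
  let f : Fin (m + 1) → ((EuclideanSpace ℝ (Fin p) × ℝ) →ₗ[ℝ] ℝ) := fun i =>
    ((innerSL ℝ (x i)).toLinearMap.comp (LinearMap.fst ℝ (EuclideanSpace ℝ (Fin p)) ℝ)) +
      LinearMap.snd ℝ (EuclideanSpace ℝ (Fin p)) ℝ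
  have hfval : ∀ i (a : EuclideanSpace ℝ (Fin p)) (b : ℝ),
      f i (a, b) = (inner ℝ a (x i) : ℝ) + b := by
    intro i a b
    simp only [f, LinearMap.add_apply, LinearMap.coe_comp, Function.comp_apply,
      ContinuousLinearMap.coe_coe, LinearMap.fst_apply, LinearMap.snd_apply, innerSL_apply_apply]
    rw [real_inner_comm]
  have hVrank : finrank ℝ (EuclideanSpace ℝ (Fin p) × ℝ) = p + 1 := by
    rw [Module.finrank_prod, finrank_euclideanSpace_fin, Module.finrank_self]
  set Φ : Set (EuclideanSpace ℝ (Fin p)) → (Fin (m + 1) → Bool) :=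
    fun T i => decide (x i ∈ T) with hΦ
  have hmaps : ∀ T ∈ {T : Set (EuclideanSpace ℝ (Fin p)) |
      ∃ (a : EuclideanSpace ℝ (Fin p)) (b : ℝ),
        T = {y | y ∈ S ∧ 0 ≤ (inner ℝ a y : ℝ) + b}}, Φ T ∈ coverPats f := by
    rintro T ⟨a, b, rfl⟩
    obtain ⟨δ, hδpos, hδ⟩ : ∃ δ : ℝ, 0 < δ ∧
        ∀ y ∈ S, (inner ℝ a y : ℝ) + b < 0 → (inner ℝ a y : ℝ) + b + δ < 0 := by
      set F := S.filter (fun y => (inner ℝ a y : ℝ) + b < 0) with hF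
      by_cases hne : F.Nonempty
      · have hsupneg : F.sup' hne (fun y => (inner ℝ a y : ℝ) + b) < 0 := by
          rw [Finset.sup'_lt_iff]
          intro y hy
          exact (Finset.mem_filter.mp hy).2
        refine ⟨-(F.sup' hne (fun y => (inner ℝ a y : ℝ) + b)) / 2, by linarith, ?_⟩
        intro y hy hneg
        have hmemF : y ∈ F := Finset.mem_filter.mpr ⟨hy, hneg⟩
        have hle := Finset.le_sup' (f := fun y => (inner ℝ a y : ℝ) + b) hmemF
        linarith
      · exact ⟨1, one_pos, fun y hy hneg =>
          absurd ⟨y, Finset.mem_filter.mpr ⟨hy, hneg⟩⟩ hne⟩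
    have key : ∀ i, (0 < f i (a, b + δ) ↔
        x i ∈ {y | y ∈ S ∧ 0 ≤ (inner ℝ a y : ℝ) + b}) ∧ f i (a, b + δ) ≠ 0 := by
      intro i
      have hval : f i (a, b + δ) = ((inner ℝ a (x i) : ℝ) + b) + δ := by
        rw [hfval]; ring
      by_cases hge : 0 ≤ (inner ℝ a (x i) : ℝ) + b
      · have hpos : 0 < f i (a, b + δ) := by rw [hval]; linarith
        exact ⟨⟨fun _ => ⟨hxS i, hge⟩, fun _ => hpos⟩, ne_of_gt hpos⟩
      · have hneg : f i (a, b + δ) < 0 := by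
          rw [hval]
          exact hδ (x i) (hxS i) (lt_of_not_ge hge)
        refine ⟨⟨fun h => absurd h (not_lt.mpr (le_of_lt hneg)), ?_⟩, ne_of_lt hneg⟩
        rintro ⟨-, h⟩
        exact absurd h hge
    refine ⟨(a, b + δ), fun i => (key i).2, ?_⟩
    funext i
    exact decide_eq_decide.mpr (key i).1.symm
  have hinj : Set.InjOn Φ {T : Set (EuclideanSpace ℝ (Fin p)) |
      ∃ (a : EuclideanSpace ℝ (Fin p)) (b : ℝ),
        T = {y | y ∈ S ∧ 0 ≤ (inner ℝ a y : ℝ) + b}} := by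
    rintro T1 h1 T2 h2 heq
    obtain ⟨a1, b1, rfl⟩ := h1
    obtain ⟨a2, b2, rfl⟩ := h2
    ext y
    constructor
    · rintro ⟨hyS, hy⟩
      obtain ⟨i, rfl⟩ := hxsurj y hyS
      have h := congrFun heq i
      simp only [hΦ, decide_eq_decide] at h
      exact h.mp ⟨hyS, hy⟩
    · rintro ⟨hyS, hy⟩
      obtain ⟨i, rfl⟩ := hxsurj y hyS
      have h := congrFun heq i
      simp only [hΦ, decide_eq_decide] at h
      exact h.mpr ⟨hyS, hy⟩
  calc Set.ncard {T : Set (EuclideanSpace ℝ (Fin p)) |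
        ∃ (a : EuclideanSpace ℝ (Fin p)) (b : ℝ),
          T = {y | y ∈ S ∧ 0 ≤ (inner ℝ a y : ℝ) + b}}
      ≤ (coverPats f).ncard := Set.ncard_le_ncard_of_injOn Φ hmaps hinj (Set.toFinite _)
    _ ≤ 2 * ∑ i ∈ Finset.range (finrank ℝ (EuclideanSpace ℝ (Fin p) × ℝ)), m.choose i :=
        coverPats_bound m _ f
    _ = 2 * ∑ i ∈ Finset.range (p + 1), (m + 1 - 1).choose i := by rw [hVrank]; simp
end

section
/- Let p ≥ 1 and let S be a finite set of n ≥ 1 points in ℝ^p. Then for every k ≥ 1, the number of distinct subsets of S expressible as S ∩ H₁ ∩ ⋯ ∩ H_k, where each H_j = {x ∈ ℝ^p : ⟨a_j, x⟩ + b_j ≥ 0} is an affine halfspace, is at most (2(n+1)^p)^k. -/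
open Classical in
noncomputable def traceFinset {α : Type*} (W : Set (α → ℝ)) (S : Finset α) : Finset (Finset α) :=
  S.powerset.filter (fun T => ∃ f ∈ W, T = S.filter (fun x => 0 ≤ f x))

lemma mem_traceFinset {α : Type*} {W : Set (α → ℝ)} {S : Finset α} {T : Finset α} :
    T ∈ traceFinset W S ↔ ∃ f ∈ W, T = S.filter (fun x => 0 ≤ f x) := by
  classical
  constructor
  · intro h
    simpa [traceFinset] using (Finset.mem_filter.mp h).2
  · rintro ⟨f, hf, rfl⟩
    simp only [traceFinset, Finset.mem_filter, Finset.mem_powerset]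
    exact ⟨Finset.filter_subset _ _, ⟨f, hf, rfl⟩⟩

lemma erase_filter_insert {α : Type*} [DecidableEq α] {S : Finset α} {s : α} (hs : s ∉ S)
    (f : α → ℝ) :
    ((insert s S).filter (fun x => 0 ≤ f x)).erase s = S.filter (fun x => 0 ≤ f x) := by
  rw [Finset.filter_insert]
  split
  · exact Finset.erase_insert (by simp [Finset.mem_filter, hs])
  · exact Finset.erase_eq_of_notMem (by simp [Finset.mem_filter, hs])

lemma subset_traceFinset_erase {α : Type*} [DecidableEq α] {W : Set (α → ℝ)} {S : Finset α}
    {s : α} (hs : s ∉ S) {T : Finset α} (hT : T ∈ traceFinset W (insert s S)) :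
    T.erase s ∈ traceFinset W S := by
  obtain ⟨f, hf, rfl⟩ := mem_traceFinset.mp hT
  exact mem_traceFinset.mpr ⟨f, hf, (erase_filter_insert hs f)⟩

/-- The key recurrence: removing a point. -/
lemma trace_insert_card_le {α : Type*} [DecidableEq α] {W W₀ : Set (α → ℝ)} {S : Finset α}
    {s : α} (hs : s ∉ S)
    (hcomb : ∀ f ∈ W, ∀ f' ∈ W, 0 ≤ f s → f' s < 0 →
      (fun x => (-(f' s)) * f x + f s * f' x) ∈ W₀) :
    (traceFinset W (insert s S)).card ≤
      (traceFinset W S).card + (traceFinset W₀ S).card := by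
  classical
  set A := traceFinset W (insert s S) with hA
  set I := A.image (fun T => T.erase s) with hI
  have hIB : I ⊆ traceFinset W S := by
    intro b hb
    obtain ⟨T, hT, rfl⟩ := Finset.mem_image.mp hb
    exact subset_traceFinset_erase hs hT
  -- fiberwise count
  have hcount : A.card = ∑ b ∈ I, (A.filter (fun T => T.erase s = b)).card :=
    Finset.card_eq_sum_card_fiberwise (fun T hT => Finset.mem_image_of_mem _ hT)
  have hfiber_sub : ∀ b ∈ I, (A.filter (fun T => T.erase s = b)) ⊆ {b, insert s b} := by
    intro b hb T hT
    obtain ⟨hTA, hTb⟩ := Finset.mem_filter.mp hT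
    by_cases hsT : s ∈ T
    · have : T = insert s b := by rw [← hTb, Finset.insert_erase hsT]
      simp [this]
    · have : T = b := by rw [← hTb, Finset.erase_eq_of_notMem hsT]
      simp [this]
  have hsb : ∀ b ∈ I, s ∉ b := by
    intro b hb
    obtain ⟨T, hT, rfl⟩ := Finset.mem_image.mp hb
    exact Finset.notMem_erase _ _
  have hfib_le : ∀ b ∈ I, (A.filter (fun T => T.erase s = b)).card ≤
      1 + (if b ∈ A ∧ insert s b ∈ A then 1 else 0) := by
    intro b hb
    split
    · calc (A.filter (fun T => T.erase s = b)).card ≤ ({b, insert s b} : Finset (Finset α)).card :=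
            Finset.card_le_card (hfiber_sub b hb)
        _ ≤ 2 := Finset.card_insert_le _ _ |>.trans (by simp)
    · rename_i hcond
      rw [Nat.add_zero]
      apply Finset.card_le_one.mpr
      intro T hT T' hT'
      have h1 := hfiber_sub b hb hT
      have h2 := hfiber_sub b hb hT'
      simp only [Finset.mem_insert, Finset.mem_singleton] at h1 h2
      have hTA := (Finset.mem_filter.mp hT).1
      have hT'A := (Finset.mem_filter.mp hT').1
      rcases h1 with rfl | rfl <;> rcases h2 with rfl | rfl <;> first
        | rfl
        | (exact absurd ⟨by assumption, by assumption⟩ hcond)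
  have hsum : A.card ≤ I.card + (I.filter (fun b => b ∈ A ∧ insert s b ∈ A)).card := by
    rw [hcount]
    calc ∑ b ∈ I, (A.filter (fun T => T.erase s = b)).card
        ≤ ∑ b ∈ I, (1 + (if b ∈ A ∧ insert s b ∈ A then 1 else 0)) :=
          Finset.sum_le_sum hfib_le
      _ = I.card + (I.filter (fun b => b ∈ A ∧ insert s b ∈ A)).card := by
          rw [Finset.sum_add_distrib, Finset.sum_const, smul_eq_mul, mul_one, Finset.sum_boole]
          simp
  have hD : (I.filter (fun b => b ∈ A ∧ insert s b ∈ A)) ⊆ traceFinset W₀ S := by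
    intro b hb
    have hbI := (Finset.mem_filter.mp hb).1
    have hbA := (Finset.mem_filter.mp hb).2.1
    have hbsA := (Finset.mem_filter.mp hb).2.2
    have hsbb : s ∉ b := hsb b hbI
    obtain ⟨f', hf'W, hf'rep⟩ := mem_traceFinset.mp hbA
    obtain ⟨f, hfW, hfrep⟩ := mem_traceFinset.mp hbsA
    -- signs at s
    have hf's : f' s < 0 := by
      by_contra h
      push_neg at h
      have : s ∈ b := by rw [hf'rep]; simp [Finset.mem_filter, h]
      exact hsbb this
    have hfs : 0 ≤ f s := by
      have : s ∈ insert s b := Finset.mem_insert_self _ _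
      rw [hfrep] at this
      exact (Finset.mem_filter.mp this).2
    -- representations over S
    have hb1 : b = S.filter (fun x => 0 ≤ f' x) := by
      rw [← erase_filter_insert hs f', ← hf'rep, Finset.erase_eq_of_notMem hsbb]
    have hb2 : b = S.filter (fun x => 0 ≤ f x) := by
      rw [← erase_filter_insert hs f, ← hfrep, Finset.erase_insert hsbb]
    refine mem_traceFinset.mpr ⟨_, hcomb f hfW f' hf'W hfs hf's, ?_⟩
    ext x
    simp only [Finset.mem_filter]
    constructor
    · intro hx
      have hx1 : x ∈ S.filter (fun x => 0 ≤ f' x) := hb1 ▸ hx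
      have hx2 : x ∈ S.filter (fun x => 0 ≤ f x) := hb2 ▸ hx
      have hxS : x ∈ S := (Finset.mem_filter.mp hx1).1
      have h1 : 0 ≤ f' x := (Finset.mem_filter.mp hx1).2
      have h2 : 0 ≤ f x := (Finset.mem_filter.mp hx2).2
      exact ⟨hxS, by nlinarith⟩
    · rintro ⟨hxS, hx⟩
      by_contra hxb
      have h1 : ¬ (0 ≤ f' x) := by
        intro h; exact hxb (hb1 ▸ Finset.mem_filter.mpr ⟨hxS, h⟩)
      have h2 : ¬ (0 ≤ f x) := by
        intro h; exact hxb (hb2 ▸ Finset.mem_filter.mpr ⟨hxS, h⟩)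
      push_neg at h1 h2
      nlinarith
  calc A.card ≤ I.card + (I.filter (fun b => b ∈ A ∧ insert s b ∈ A)).card := hsum
    _ ≤ (traceFinset W S).card + (traceFinset W₀ S).card :=
        Nat.add_le_add (Finset.card_le_card hIB) (Finset.card_le_card hD)

/-- Degenerate case: if no function is negative at `s`, adding `s` doesn't increase the count. -/
lemma trace_insert_card_le_of_nonneg {α : Type*} [DecidableEq α] {W : Set (α → ℝ)}
    {S : Finset α} {s : α} (hs : s ∉ S) (hpos : ∀ f ∈ W, 0 ≤ f s) :
    (traceFinset W (insert s S)).card ≤ (traceFinset W S).card := by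
  classical
  apply Finset.card_le_card_of_injOn (fun T => T.erase s)
  · intro T hT; exact subset_traceFinset_erase hs hT
  · intro T hT T' hT' h
    have hmem : ∀ U ∈ traceFinset W (insert s S), s ∈ U := by
      intro U hU
      obtain ⟨f, hf, rfl⟩ := mem_traceFinset.mp hU
      exact Finset.mem_filter.mpr ⟨Finset.mem_insert_self _ _, hpos f hf⟩
    simp only at h
    rw [← Finset.insert_erase (hmem T (by simpa using hT)), ← Finset.insert_erase (hmem T' (by simpa using hT')), h]

def covG : ℕ → ℕ → ℕ
  | 0, _ => 1
  | (d+1), n => 3 * (n+1)^d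

lemma pow_succ_key (A e : ℕ) : A^(e+1) + (e+1)*A^e ≤ (A+1)^(e+1) := by
  induction e with
  | zero => simp
  | succ e ih =>
    have h1 : (A^(e+1) + (e+1)*A^e) * (A+1) ≤ (A+1)^(e+1) * (A+1) :=
      Nat.mul_le_mul_right _ ih
    have h2 : (A^(e+1) + (e+1)*A^e) * (A+1)
        = A^(e+2) + (e+2)*A^(e+1) + (e+1)*A^e := by ring
    have h3 : (A+1)^(e+1) * (A+1) = (A+1)^(e+2) := by ring
    show A^(e+2) + (e+2)*A^(e+1) ≤ (A+1)^(e+2)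
    omega

lemma trace_card_le_covG {α : Type*} [DecidableEq α] :
    ∀ (d : ℕ) (W : Submodule ℝ (α → ℝ)), Module.Finite ℝ ↥W → Module.finrank ℝ ↥W ≤ d →
    ∀ S : Finset α, (traceFinset (W : Set (α → ℝ)) S).card ≤ covG d S.card := by
  intro d
  induction d with
  | zero =>
    intro W hfin hrank S
    haveI : FiniteDimensional ℝ ↥W := hfin
    have hzero : ∀ f ∈ W, f = (0 : α → ℝ) := by
      intro f hf
      have := finrank_zero_iff_forall_zero.mp (Nat.le_zero.mp hrank) ⟨f, hf⟩
      exact congrArg Subtype.val this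
    have hsub : traceFinset (W : Set (α → ℝ)) S ⊆ {S} := by
      intro T hT
      obtain ⟨f, hf, rfl⟩ := mem_traceFinset.mp hT
      rw [hzero f hf]
      simp
    calc _ ≤ ({S} : Finset (Finset α)).card := Finset.card_le_card hsub
      _ = 1 := Finset.card_singleton _
  | succ d ih =>
    intro W hfin hrank S
    haveI : FiniteDimensional ℝ ↥W := hfin
    match d with
    | 0 =>
      -- rank ≤ 1 : at most 3 traces
      obtain ⟨v, hv⟩ := finrank_le_one_iff.mp hrank
      have hsub : traceFinset (W : Set (α → ℝ)) S ⊆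
          {S.filter (fun x => 0 ≤ (v : α → ℝ) x),
           S.filter (fun x => 0 ≤ -((v : α → ℝ) x)), S} := by
        intro T hT
        obtain ⟨f, hf, rfl⟩ := mem_traceFinset.mp hT
        obtain ⟨c, hc⟩ := hv ⟨f, hf⟩
        have hfc : f = fun x => c * (v : α → ℝ) x := by
          have := congrArg Subtype.val hc
          simp only [Submodule.coe_smul] at this
          rw [← this]; rfl
        rcases lt_trichotomy c 0 with hc0 | hc0 | hc0
        · have : S.filter (fun x => 0 ≤ f x) = S.filter (fun x => 0 ≤ -((v : α → ℝ) x)) := by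
            apply Finset.filter_congr
            intro x _
            rw [hfc]
            simp only [eq_iff_iff]
            constructor
            · intro h; nlinarith
            · intro h; nlinarith
          simp [this]
        · have : S.filter (fun x => 0 ≤ f x) = S := by
            apply Finset.filter_true_of_mem
            intro x _
            rw [hfc, hc0]; simp
          simp [this]
        · have : S.filter (fun x => 0 ≤ f x) = S.filter (fun x => 0 ≤ (v : α → ℝ) x) := by
            apply Finset.filter_congr
            intro x _
            rw [hfc]
            simp only [eq_iff_iff]
            constructor
            · intro h; nlinarith
            · intro h; nlinarith
          simp [this]
      calc _ ≤ ({S.filter (fun x => 0 ≤ (v : α → ℝ) x),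
           S.filter (fun x => 0 ≤ -((v : α → ℝ) x)), S} : Finset (Finset α)).card :=
            Finset.card_le_card hsub
        _ ≤ 3 := by
            apply (Finset.card_insert_le _ _).trans
            have := (Finset.card_insert_le (S.filter (fun x => 0 ≤ -((v : α → ℝ) x)))
              ({S} : Finset (Finset α)))
            simp at this ⊢
            omega
        _ ≤ covG 1 S.card := by simp [covG]
    | e+1 =>
      induction S using Finset.induction_on with
      | empty =>
        have hsub : traceFinset (W : Set (α → ℝ)) ∅ ⊆ {∅} := by
          intro T hT
          obtain ⟨f, hf, rfl⟩ := mem_traceFinset.mp hT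
          simp
        calc _ ≤ 1 := by
              simpa using Finset.card_le_card hsub
          _ ≤ covG (e+1+1) (∅ : Finset α).card := by simp [covG]
      | insert s S hs ihS =>
        rw [Finset.card_insert_of_notMem hs]
        by_cases hneg : ∃ f ∈ (W : Set (α → ℝ)), f s < 0
        · obtain ⟨f₁, hf₁W, hf₁s⟩ := hneg
          set W₀ := W ⊓ LinearMap.ker (LinearMap.proj (R := ℝ) (φ := fun _ : α => ℝ) s) with hW₀
          haveI : FiniteDimensional ℝ ↥W₀ := Submodule.finiteDimensional_of_le inf_le_left
          have hlt : W₀ < W := by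
            apply lt_of_le_of_ne inf_le_left
            intro h
            have hm : f₁ ∈ W ⊓ LinearMap.ker (LinearMap.proj (R := ℝ) (φ := fun _ : α => ℝ) s) := by
              rw [h]; exact hf₁W
            have hk : f₁ s = 0 := by
              have := (Submodule.mem_inf.mp hm).2
              simpa using this
            linarith
          have hrank₀ : Module.finrank ℝ ↥W₀ ≤ e + 1 := by
            have := Submodule.finrank_lt_finrank_of_lt hlt
            omega
          have hC := ih W₀ inferInstance hrank₀ S
          have hcomb : ∀ f ∈ (W : Set (α → ℝ)), ∀ f' ∈ (W : Set (α → ℝ)), 0 ≤ f s → f' s < 0 →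
              (fun x => (-(f' s)) * f x + f s * f' x) ∈ (W₀ : Set (α → ℝ)) := by
            intro f hf f' hf' hfs hf's
            have hmemW : (fun x => (-(f' s)) * f x + f s * f' x) ∈ W := by
              have := W.add_mem (W.smul_mem (-(f' s)) hf) (W.smul_mem (f s) hf')
              convert this using 1
              rfl
            refine ⟨hmemW, ?_⟩
            show (fun x => (-(f' s)) * f x + f s * f' x) ∈ LinearMap.ker (LinearMap.proj (R := ℝ) (φ := fun _ : α => ℝ) s)
            rw [LinearMap.mem_ker]
            show (-(f' s)) * f s + f s * f' s = 0
            ring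
          have hrec := trace_insert_card_le hs hcomb
          have hB := ihS
          calc (traceFinset (W : Set (α → ℝ)) (insert s S)).card
              ≤ (traceFinset (W : Set (α → ℝ)) S).card +
                (traceFinset (W₀ : Set (α → ℝ)) S).card := hrec
            _ ≤ covG (e+1+1) S.card + covG (e+1) S.card := Nat.add_le_add hB hC
            _ ≤ covG (e+1+1) (S.card + 1) := by
                simp only [covG]
                have hkey := pow_succ_key (S.card + 1) e
                have h2 : (S.card+1)^e ≤ (e+1)*(S.card+1)^e :=
                  Nat.le_mul_of_pos_left _ (by omega)
                omega
        · push_neg at hneg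
          have hpos : ∀ f ∈ (W : Set (α → ℝ)), 0 ≤ f s := by
            intro f hf; exact not_lt.mp (by simpa using hneg f hf)
          calc (traceFinset (W : Set (α → ℝ)) (insert s S)).card
              ≤ (traceFinset (W : Set (α → ℝ)) S).card :=
                trace_insert_card_le_of_nonneg hs hpos
            _ ≤ covG (e+1+1) S.card := ihS
            _ ≤ covG (e+1+1) (S.card + 1) := by
                simp only [covG]
                have := Nat.pow_le_pow_left (show S.card+1 ≤ S.card+1+1 by omega) (e+1)
                omega

open Classical in
/-- Superlevel-set traces of a fixed function form a chain, hence few of them. -/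
lemma chain_card {α : Type*} (S : Finset α) (g : α → ℝ) :
    (S.powerset.filter (fun T => ∃ t : ℝ, T = S.filter (fun x => t ≤ g x))).card
      ≤ S.card + 1 := by
  classical
  have hmono : ∀ t t' : ℝ, t ≤ t' →
      S.filter (fun x => t' ≤ g x) ⊆ S.filter (fun x => t ≤ g x) := by
    intro t t' h x hx
    have := Finset.mem_filter.mp hx
    exact Finset.mem_filter.mpr ⟨this.1, le_trans h this.2⟩
  have hmain : (S.powerset.filter (fun T => ∃ t : ℝ, T = S.filter (fun x => t ≤ g x))).card
      ≤ (Finset.range (S.card + 1)).card := by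
    apply Finset.card_le_card_of_injOn (fun T => T.card)
    · intro T hT
      have hTS : T ⊆ S := Finset.mem_powerset.mp (Finset.mem_filter.mp hT).1
      simp only [Finset.mem_coe, Finset.mem_range]
      exact Nat.lt_succ_of_le (Finset.card_le_card hTS)
    · intro T hT T' hT' hcard
      simp only [Finset.coe_filter, Set.mem_setOf_eq] at hT hT'
      obtain ⟨-, t, rfl⟩ := hT
      obtain ⟨-, t', rfl⟩ := hT'
      simp only at hcard
      rcases le_total t t' with h | h
      · exact ((Finset.eq_of_subset_of_card_le (hmono t t' h) (le_of_eq hcard)).symm)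
      · exact (Finset.eq_of_subset_of_card_le (hmono t' t h) (ge_of_eq hcard))
  simpa using hmain

def affW (p : ℕ) : Set (EuclideanSpace ℝ (Fin p) → ℝ) :=
  {f | ∃ (a : EuclideanSpace ℝ (Fin p)) (b : ℝ), f = fun x => (inner ℝ a x : ℝ) + b}

lemma inner_one_dim (a x : EuclideanSpace ℝ (Fin 1)) : (inner ℝ a x : ℝ) = a 0 * x 0 := by
  simp [PiLp.inner_apply, RCLike.inner_apply, Fin.sum_univ_one]
  ring

open Classical in
lemma aff_trace_card_le_one (S : Finset (EuclideanSpace ℝ (Fin 1))) :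
    (traceFinset (affW 1) S).card ≤ 2 * (S.card + 1) := by
  classical
  rcases S.eq_empty_or_nonempty with rfl | hne
  · have hsub : traceFinset (affW 1) (∅ : Finset (EuclideanSpace ℝ (Fin 1))) ⊆ {∅} := by
      intro T hT
      obtain ⟨f, hf, rfl⟩ := mem_traceFinset.mp hT
      simp
    have := Finset.card_le_card hsub
    simp at this ⊢
    omega
  · set g : EuclideanSpace ℝ (Fin 1) → ℝ := fun x => x 0 with hg
    set U := S.powerset.filter (fun T => ∃ t : ℝ, T = S.filter (fun x => t ≤ g x)) with hU
    set D := S.powerset.filter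
      (fun T => ∃ t : ℝ, T = S.filter (fun x => t ≤ -(g x))) with hD
    have hsub : traceFinset (affW 1) S ⊆ U ∪ D := by
      intro T hT
      obtain ⟨f, hf, rfl⟩ := mem_traceFinset.mp hT
      obtain ⟨a, b, rfl⟩ := hf
      have hfx : ∀ x : EuclideanSpace ℝ (Fin 1),
          (0 ≤ (fun x => (inner ℝ a x : ℝ) + b) x) ↔ (0 ≤ a 0 * g x + b) := by
        intro x
        show (0 ≤ (inner ℝ a x : ℝ) + b) ↔ _
        rw [inner_one_dim]
      rcases lt_trichotomy (a 0) 0 with ha | ha | ha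
      · -- descending: in D
        apply Finset.mem_union_right
        rw [hD]
        refine Finset.mem_filter.mpr ⟨Finset.mem_powerset.mpr (Finset.filter_subset _ _),
          ⟨b / a 0, ?_⟩⟩
        apply Finset.filter_congr
        intro x _
        rw [hfx x, div_le_iff_of_neg ha]
        constructor <;> intro h <;> nlinarith
      · -- constant
        by_cases hb : 0 ≤ b
        · apply Finset.mem_union_left
          rw [hU]
          have hTS : S.filter (fun x => 0 ≤ (fun x => (inner ℝ a x : ℝ) + b) x) = S := by
            apply Finset.filter_true_of_mem
            intro x _
            rw [hfx x, ha]
            simpa using hb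
          rw [hTS]
          refine Finset.mem_filter.mpr ⟨Finset.mem_powerset_self _,
            ⟨(S.image g).min' (hne.image g), ?_⟩⟩
          symm
          apply Finset.filter_true_of_mem
          intro x hx
          exact Finset.min'_le _ _ (Finset.mem_image_of_mem g hx)
        · apply Finset.mem_union_left
          rw [hU]
          have hTS : S.filter (fun x => 0 ≤ (fun x => (inner ℝ a x : ℝ) + b) x) = ∅ := by
            apply Finset.filter_false_of_mem
            intro x _
            rw [hfx x, ha]
            simpa using hb
          rw [hTS]
          refine Finset.mem_filter.mpr ⟨Finset.mem_powerset.mpr (Finset.empty_subset _),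
            ⟨(S.image g).max' (hne.image g) + 1, ?_⟩⟩
          symm
          apply Finset.filter_false_of_mem
          intro x hx
          have := Finset.le_max' (S.image g) (g x) (Finset.mem_image_of_mem g hx)
          intro hcon
          linarith
      · -- ascending: in U
        apply Finset.mem_union_left
        rw [hU]
        refine Finset.mem_filter.mpr ⟨Finset.mem_powerset.mpr (Finset.filter_subset _ _),
          ⟨-b / a 0, ?_⟩⟩
        apply Finset.filter_congr
        intro x _
        rw [hfx x, div_le_iff₀ ha]
        constructor <;> intro h <;> nlinarith
    calc (traceFinset (affW 1) S).card ≤ (U ∪ D).card := Finset.card_le_card hsub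
      _ ≤ U.card + D.card := Finset.card_union_le _ _
      _ ≤ (S.card + 1) + (S.card + 1) := Nat.add_le_add (chain_card S g) (chain_card S _)
      _ = 2 * (S.card + 1) := by ring

noncomputable def shiftL (p : ℕ) (s : EuclideanSpace ℝ (Fin p)) :
    EuclideanSpace ℝ (Fin p) →ₗ[ℝ] (EuclideanSpace ℝ (Fin p) → ℝ) where
  toFun a := fun x => (inner ℝ a x : ℝ) - (inner ℝ a s : ℝ)
  map_add' a a' := by funext x; simp only [inner_add_left, Pi.add_apply]; ring
  map_smul' c a := by
    funext x
    simp only [real_inner_smul_left, RingHom.id_apply, Pi.smul_apply, smul_eq_mul]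
    ring

lemma aff_trace_card_le (p : ℕ) (hp : 1 ≤ p) (S : Finset (EuclideanSpace ℝ (Fin p))) :
    (traceFinset (affW p) S).card ≤ 2 * (S.card + 1) ^ p := by
  classical
  rcases eq_or_lt_of_le hp with h1 | h2
  · subst h1
    simpa [pow_one] using aff_trace_card_le_one S
  · obtain ⟨q, rfl⟩ : ∃ q, p = q + 2 := ⟨p - 2, by omega⟩
    induction S using Finset.induction_on with
    | empty =>
      have hsub : traceFinset (affW (q+2)) (∅ : Finset (EuclideanSpace ℝ (Fin (q+2)))) ⊆ {∅} := by
        intro T hT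
        obtain ⟨f, hf, rfl⟩ := mem_traceFinset.mp hT
        simp
      have := Finset.card_le_card hsub
      simp at this ⊢
      omega
    | insert s S hs ihS =>
      set V : Submodule ℝ (EuclideanSpace ℝ (Fin (q+2)) → ℝ) :=
        LinearMap.range (shiftL (q+2) s) with hV
      have hcomb : ∀ f ∈ affW (q+2), ∀ f' ∈ affW (q+2), 0 ≤ f s → f' s < 0 →
          (fun x => (-(f' s)) * f x + f s * f' x) ∈ (V : Set (EuclideanSpace ℝ (Fin (q+2)) → ℝ)) := by
        intro f hf f' hf' hfs hf's
        obtain ⟨a, b, rfl⟩ := hf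
        obtain ⟨a', b', rfl⟩ := hf'
        rw [SetLike.mem_coe, hV, LinearMap.mem_range]
        refine ⟨(-((inner ℝ a' s : ℝ) + b')) • a + ((inner ℝ a s : ℝ) + b) • a', ?_⟩
        funext x
        show (inner ℝ ((-((inner ℝ a' s : ℝ) + b')) • a + ((inner ℝ a s : ℝ) + b) • a') x : ℝ) -
            (inner ℝ ((-((inner ℝ a' s : ℝ) + b')) • a + ((inner ℝ a s : ℝ) + b) • a') s : ℝ) =
            (-((inner ℝ a' s : ℝ) + b')) * ((inner ℝ a x : ℝ) + b) +
              ((inner ℝ a s : ℝ) + b) * ((inner ℝ a' x : ℝ) + b')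
        simp only [inner_add_left, real_inner_smul_left]
        ring
      have hrec := trace_insert_card_le hs hcomb
      have hfinV : Module.Finite ℝ ↥V := inferInstance
      have hrkV : Module.finrank ℝ ↥V ≤ q + 2 :=
        (LinearMap.finrank_range_le _).trans (by simp [finrank_euclideanSpace_fin])
      have hC := trace_card_le_covG (q+2) V hfinV hrkV S
      have hCval : covG (q+2) S.card = 3 * (S.card + 1) ^ (q+1) := rfl
      rw [hCval] at hC
      rw [Finset.card_insert_of_notMem hs]
      have hkey : (S.card+1)^(q+2) + (q+2)*(S.card+1)^(q+1) ≤ (S.card+1+1)^(q+2) :=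
        pow_succ_key (S.card + 1) (q + 1)
      have hQ : 4 * (S.card + 1) ^ (q+1) ≤ 2 * ((q + 2) * (S.card + 1) ^ (q+1)) := by
        have := Nat.mul_le_mul_right ((S.card + 1) ^ (q+1)) (show 2 ≤ q + 2 by omega)
        omega
      calc (traceFinset (affW (q+2)) (insert s S)).card
          ≤ (traceFinset (affW (q+2)) S).card + (traceFinset (V : Set _) S).card := hrec
        _ ≤ 2 * (S.card + 1) ^ (q+2) + 3 * (S.card + 1) ^ (q+1) := by
            have := ihS
            omega
        _ ≤ 2 * (S.card + 1 + 1) ^ (q+2) := by omega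

/-- For a finite set `S` of `n ≥ 1` points in `ℝ^p` (`p ≥ 1`) and every `k ≥ 1`, the number
of distinct subsets of `S` expressible as an intersection of `S` with `k` affine halfspaces
`{x : ⟨aⱼ, x⟩ + bⱼ ≥ 0}` is at most `(2(n+1)^p)^k`. -/
theorem halfspace_intersection_trace_bound (p n : ℕ) (hp : 1 ≤ p) (hn : 1 ≤ n)
    (S : Finset (EuclideanSpace ℝ (Fin p))) (hS : S.card = n) (k : ℕ) (hk : 1 ≤ k) :
    Set.ncard {T : Set (EuclideanSpace ℝ (Fin p)) |
        ∃ (a : Fin k → EuclideanSpace ℝ (Fin p)) (b : Fin k → ℝ),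
          T = ↑S ∩ ⋂ j, {x : EuclideanSpace ℝ (Fin p) | 0 ≤ (inner ℝ (a j) x : ℝ) + b j}} ≤
      (2 * (n + 1) ^ p) ^ k := by
  classical
  haveI : Nonempty (Fin k) := ⟨⟨0, hk⟩⟩
  set H := traceFinset (affW p) S with hH
  have hHcard : H.card ≤ 2 * (n + 1) ^ p := by
    have := aff_trace_card_le p hp S
    rwa [hS] at this
  set P := Fintype.piFinset (fun _ : Fin k => H) with hP
  have hsub : {T : Set (EuclideanSpace ℝ (Fin p)) |
        ∃ (a : Fin k → EuclideanSpace ℝ (Fin p)) (b : Fin k → ℝ),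
          T = ↑S ∩ ⋂ j, {x : EuclideanSpace ℝ (Fin p) | 0 ≤ (inner ℝ (a j) x : ℝ) + b j}} ⊆
      (fun u : Fin k → Finset (EuclideanSpace ℝ (Fin p)) =>
        ⋂ j, (↑(u j) : Set (EuclideanSpace ℝ (Fin p)))) '' ↑P := by
    rintro T ⟨a, b, rfl⟩
    refine ⟨fun j => S.filter (fun x => 0 ≤ (inner ℝ (a j) x : ℝ) + b j), ?_, ?_⟩
    · rw [Finset.mem_coe, hP, Fintype.mem_piFinset]
      intro j
      exact mem_traceFinset.mpr ⟨fun x => (inner ℝ (a j) x : ℝ) + b j, ⟨a j, b j, rfl⟩, rfl⟩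
    · show (⋂ j, (↑(S.filter (fun x => 0 ≤ (inner ℝ (a j) x : ℝ) + b j)) :
          Set (EuclideanSpace ℝ (Fin p)))) = _
      rw [Set.inter_iInter]
      apply Set.iInter_congr
      intro j
      ext x
      simp [Finset.mem_filter]
  calc Set.ncard {T : Set (EuclideanSpace ℝ (Fin p)) |
        ∃ (a : Fin k → EuclideanSpace ℝ (Fin p)) (b : Fin k → ℝ),
          T = ↑S ∩ ⋂ j, {x : EuclideanSpace ℝ (Fin p) | 0 ≤ (inner ℝ (a j) x : ℝ) + b j}}
      ≤ Set.ncard ((fun u : Fin k → Finset (EuclideanSpace ℝ (Fin p)) =>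
          ⋂ j, (↑(u j) : Set (EuclideanSpace ℝ (Fin p)))) '' ↑P) :=
        Set.ncard_le_ncard hsub ((P.finite_toSet).image _)
    _ ≤ Set.ncard (↑P : Set (Fin k → Finset (EuclideanSpace ℝ (Fin p)))) :=
        Set.ncard_image_le P.finite_toSet
    _ = P.card := Set.ncard_coe_finset _
    _ = H.card ^ k := by
        rw [hP, Fintype.card_piFinset]
        simp
    _ ≤ (2 * (n + 1) ^ p) ^ k := Nat.pow_le_pow_left hHcard k
end
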